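/- For p ∈ {1, ∞} and any A ∈ ℝ^{n×n}, the infimum over all positive diagonal weights of the weighted ℓ_p logarithmic norm equals the spectral abscissa of the Metzler majorant: inf_{η ∈ ℝ^n_{>0}} μ_{p,[η]}(A) = α(⌈A⌉_Mzr), and this value is ≥ α(A). -/

import Mathlib

open Finset

/-- Spectral abscissa: supremum of real parts of (complex) eigenvalues. -/
noncomputable def specAbs {n : ℕ} (A : Matrix (Fin n) (Fin n) ℝ) : ℝ :=
  sSup {r : ℝ | ∃ μ : ℂ, μ ∈ spectrum ℂ (A.map (algebraMap ℝ ℂ)) ∧ r = μ.re}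

/-- Metzler majorant. -/
def mzr {n : ℕ} (A : Matrix (Fin n) (Fin n) ℝ) : Matrix (Fin n) (Fin n) ℝ :=
  fun i j => if i = j then A i j else |A i j|

/-- Weighted ℓ¹ logarithmic norm (explicit formula). -/
noncomputable def mu1 {n : ℕ} (η : Fin n → ℝ) (A : Matrix (Fin n) (Fin n) ℝ) : ℝ :=
  ⨆ i, (A i i + ∑ j ∈ univ.erase i, (η j / η i) * |A j i|)

/-- Weighted ℓ_∞ logarithmic norm (for the weight `[η]⁻¹`, explicit formula). -/
noncomputable def muInf {n : ℕ} (η : Fin n → ℝ) (A : Matrix (Fin n) (Fin n) ℝ) : ℝ :=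
  ⨆ i, (A i i + ∑ j ∈ univ.erase i, (η j / η i) * |A i j|)

namespace InfMuAux

open scoped Matrix

variable {n : ℕ}

/-- entrywise nonnegativity -/
def Nn (B : Matrix (Fin n) (Fin n) ℝ) : Prop := ∀ i j, 0 ≤ B i j

/-- Metzler property -/
def Mzl (B : Matrix (Fin n) (Fin n) ℝ) : Prop := ∀ i j, i ≠ j → 0 ≤ B i j

lemma Nn.mul {B C : Matrix (Fin n) (Fin n) ℝ} (hB : Nn B) (hC : Nn C) : Nn (B * C) := by
  intro i j
  rw [Matrix.mul_apply]
  exact Finset.sum_nonneg fun k _ => mul_nonneg (hB i k) (hC k j)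

lemma Nn.pow {B : Matrix (Fin n) (Fin n) ℝ} (hB : Nn B) (k : ℕ) : Nn (B ^ k) := by
  induction k with
  | zero => intro i j; rw [pow_zero]; by_cases h : i = j <;> simp [Matrix.one_apply, h]
  | succ m ih => rw [pow_succ]; exact ih.mul hB

lemma Nn.smul {B : Matrix (Fin n) (Fin n) ℝ} (hB : Nn B) {c : ℝ} (hc : 0 ≤ c) : Nn (c • B) :=
  fun i j => mul_nonneg hc (hB i j)

lemma algmap_sub (K : Matrix (Fin n) (Fin n) ℂ) (μ : ℂ) :
    (algebraMap ℂ (Matrix (Fin n) (Fin n) ℂ)) μ - K = μ • (1 : Matrix (Fin n) (Fin n) ℂ) - K := by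
  ext i j
  by_cases h : i = j <;>
    simp [Matrix.algebraMap_matrix_apply, Matrix.one_apply, h]

lemma mem_spec_iff_det (K : Matrix (Fin n) (Fin n) ℂ) (μ : ℂ) :
    μ ∈ spectrum ℂ K ↔ (μ • (1 : Matrix (Fin n) (Fin n) ℂ) - K).det = 0 := by
  rw [spectrum.mem_iff, algmap_sub, Matrix.isUnit_iff_isUnit_det, isUnit_iff_ne_zero, not_ne_iff]

lemma map_smul_one_sub (A : Matrix (Fin n) (Fin n) ℝ) (r : ℝ) :
    (r • (1 : Matrix (Fin n) (Fin n) ℝ) - A).map (algebraMap ℝ ℂ)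
      = (r : ℂ) • (1 : Matrix (Fin n) (Fin n) ℂ) - A.map (algebraMap ℝ ℂ) := by
  ext i j
  by_cases h : i = j <;> simp [Matrix.map_apply, Matrix.one_apply, h]

/-- Weighted Gershgorin bound. -/
lemma gershgorin (A : Matrix (Fin n) (Fin n) ℝ) (η : Fin n → ℝ) (hη : ∀ i, 0 < η i)
    {μ : ℂ} (hμ : μ ∈ spectrum ℂ (A.map (algebraMap ℝ ℂ))) : μ.re ≤ muInf η A := by
  rw [mem_spec_iff_det] at hμ
  obtain ⟨v, hv0, hv⟩ := (Matrix.exists_mulVec_eq_zero_iff).2 hμ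
  have hvec : ∀ i, μ * v i = ∑ j, (A i j : ℂ) * v j := by
    intro i
    have h1 := congrFun hv i
    simp only [Matrix.mulVec, dotProduct, Matrix.sub_apply, Matrix.smul_apply,
      Matrix.one_apply, smul_eq_mul, mul_ite, mul_one, mul_zero, ite_mul, zero_mul,
      sub_mul, Finset.sum_sub_distrib, Finset.sum_ite_eq, mem_univ, if_pos,
      Pi.zero_apply, sub_eq_zero, Matrix.map_apply] at h1
    exact h1
  obtain ⟨j0, hj0⟩ : ∃ j, v j ≠ 0 := Function.ne_iff.1 hv0
  obtain ⟨i, -, hi⟩ := Finset.exists_max_image univ (fun j => ‖v j‖ / η j) ⟨j0, mem_univ j0⟩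
  have hvi : 0 < ‖v i‖ := by
    have h2 : 0 < ‖v j0‖ / η j0 := div_pos (norm_pos_iff.2 hj0) (hη j0)
    have h4 : 0 < ‖v i‖ / η i := h2.trans_le (hi j0 (mem_univ j0))
    have h5 := mul_pos h4 (hη i)
    rwa [div_mul_cancel₀ _ (hη i).ne'] at h5
  have hvb : ∀ j, ‖v j‖ ≤ η j / η i * ‖v i‖ := by
    intro j
    have h3 := hi j (mem_univ j)
    rw [div_le_div_iff₀ (hη j) (hη i)] at h3
    rw [div_mul_eq_mul_div, le_div_iff₀ (hη i)]
    calc ‖v j‖ * η i ≤ ‖v i‖ * η j := h3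
    _ = η j * ‖v i‖ := by ring
  have hkey : μ.re ≤ A i i + ∑ j ∈ univ.erase i, (η j / η i) * |A i j| := by
    have h6 : (μ - (A i i : ℂ)) * v i = ∑ j ∈ univ.erase i, (A i j : ℂ) * v j := by
      have h7 := hvec i
      rw [← Finset.add_sum_erase univ _ (mem_univ i)] at h7
      rw [sub_mul, h7]
      ring
    have h8 : ‖μ - (A i i : ℂ)‖ * ‖v i‖ ≤ (∑ j ∈ univ.erase i, (η j / η i) * |A i j|) * ‖v i‖ := by
      rw [← norm_mul, h6]
      calc ‖∑ j ∈ univ.erase i, (A i j : ℂ) * v j‖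
          ≤ ∑ j ∈ univ.erase i, ‖(A i j : ℂ) * v j‖ := norm_sum_le _ _
      _ ≤ ∑ j ∈ univ.erase i, |A i j| * (η j / η i * ‖v i‖) := by
          refine Finset.sum_le_sum fun j _ => ?_
          rw [norm_mul, Complex.norm_real, Real.norm_eq_abs]
          exact mul_le_mul_of_nonneg_left (hvb j) (abs_nonneg _)
      _ = (∑ j ∈ univ.erase i, (η j / η i) * |A i j|) * ‖v i‖ := by
          rw [Finset.sum_mul]; exact Finset.sum_congr rfl fun j _ => by ring
    have h9 : ‖μ - (A i i : ℂ)‖ ≤ ∑ j ∈ univ.erase i, (η j / η i) * |A i j| :=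
      le_of_mul_le_mul_right (by simpa using h8) hvi
    have h10 : μ.re - A i i ≤ ‖μ - (A i i : ℂ)‖ := by
      have := Complex.re_le_norm (μ - (A i i : ℂ))
      simpa [Complex.sub_re, Complex.ofReal_re] using this
    linarith
  refine hkey.trans ?_
  have hbdd : BddAbove (Set.range fun i => A i i + ∑ j ∈ univ.erase i, (η j / η i) * |A i j|) :=
    Set.Finite.bddAbove (Set.finite_range _)
  exact le_ciSup hbdd i

/-- the set of real parts of eigenvalues -/
def SA (A : Matrix (Fin n) (Fin n) ℝ) : Set ℝ :=
  {r : ℝ | ∃ μ : ℂ, μ ∈ spectrum ℂ (A.map (algebraMap ℝ ℂ)) ∧ r = μ.re}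

lemma specAbs_eq (A : Matrix (Fin n) (Fin n) ℝ) : specAbs A = sSup (SA A) := rfl

lemma bddAbove_SA (A : Matrix (Fin n) (Fin n) ℝ) : BddAbove (SA A) := by
  refine ⟨muInf (fun _ => 1) A, fun r hr => ?_⟩
  obtain ⟨μ, hμ, rfl⟩ := hr
  exact gershgorin A _ (fun _ => one_pos) hμ

section Nonempty

attribute [local instance] Matrix.linftyOpNormedRing Matrix.linftyOpNormedAlgebra

lemma nonempty_SA (hn : 0 < n) (A : Matrix (Fin n) (Fin n) ℝ) : (SA A).Nonempty := by
  have : Nontrivial (Matrix (Fin n) (Fin n) ℂ) := by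
    refine ⟨0, 1, fun h => ?_⟩
    have := congrFun (congrFun h ⟨0, hn⟩) ⟨0, hn⟩
    simp [Matrix.one_apply] at this
  obtain ⟨μ, hμ⟩ := spectrum.nonempty (A.map (algebraMap ℝ ℂ))
  exact ⟨μ.re, μ, hμ, rfl⟩

end Nonempty

lemma det_ne_of_specAbs_lt {A : Matrix (Fin n) (Fin n) ℝ} {r : ℝ} (hr : specAbs A < r) :
    (r • (1 : Matrix (Fin n) (Fin n) ℝ) - A).det ≠ 0 := by
  intro hdet
  have h1 : ((r : ℂ) • (1 : Matrix (Fin n) (Fin n) ℂ) - A.map (algebraMap ℝ ℂ)).det = 0 := by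
    rw [← map_smul_one_sub, ← RingHom.mapMatrix_apply, ← RingHom.map_det, hdet, map_zero]
  have h2 : (r : ℂ) ∈ spectrum ℂ (A.map (algebraMap ℝ ℂ)) := (mem_spec_iff_det _ _).2 h1
  have h3 : r ∈ SA A := ⟨r, h2, by simp⟩
  exact absurd (le_csSup (bddAbove_SA A) h3) (not_le.2 hr)

lemma isUnit_det_of_specAbs_lt {A : Matrix (Fin n) (Fin n) ℝ} {r : ℝ} (hr : specAbs A < r) :
    IsUnit (r • (1 : Matrix (Fin n) (Fin n) ℝ) - A).det :=
  isUnit_iff_ne_zero.2 (det_ne_of_specAbs_lt hr)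

section NormArguments

attribute [local instance] Matrix.linftyOpNormedRing Matrix.linftyOpNormedAlgebra

lemma Nn.tsum {f : ℕ → Matrix (Fin n) (Fin n) ℝ} (hf : Summable f) (h : ∀ k, Nn (f k)) :
    Nn (∑' k, f k) := by
  intro i j
  have h1 : HasSum (fun k => f k i j) ((∑' k, f k) i j) := by
    have h2 := hf.hasSum
    replace h2 := Pi.hasSum.1 h2
    have h3 := h2 i
    rw [Pi.hasSum] at h3
    exact h3 j
  exact h1.nonneg (fun k => h k i j)

/-- geometric series inverse is nonnegative -/
lemma nn_geom_inv {x : Matrix (Fin n) (Fin n) ℝ} (hx : Nn x) (hnorm : ‖x‖ < 1) :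
    Nn (∑' k, x ^ k) ∧ (1 - x) * (∑' k, x ^ k) = 1 ∧ (∑' k, x ^ k) * (1 - x) = 1 := by
  refine ⟨Nn.tsum (summable_geometric_of_norm_lt_one hnorm) (fun k => hx.pow k),
    mul_neg_geom_series x hnorm, geom_series_mul_neg x hnorm⟩

/-- step lemma: nonnegativity of the resolvent propagates a bit to the left -/
lemma step {M : Matrix (Fin n) (Fin n) ℝ} {r' : ℝ} (ha' : specAbs M < r')
    (hR' : Nn ((r' • (1 : Matrix (Fin n) (Fin n) ℝ) - M)⁻¹)) :
    ∃ δ > 0, ∀ t, specAbs M < t → t ≤ r' → r' - t < δ →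
      Nn ((t • (1 : Matrix (Fin n) (Fin n) ℝ) - M)⁻¹) := by
  set R' := (r' • (1 : Matrix (Fin n) (Fin n) ℝ) - M)⁻¹ with hR'def
  refine ⟨(‖R'‖ + 1)⁻¹, by positivity, fun t hat hle hsmall => ?_⟩
  set δ := r' - t with hδdef
  have hδ0 : 0 ≤ δ := by simp [hδdef]; linarith
  set x := δ • R' with hxdef
  have hxnn : Nn x := hR'.smul hδ0
  have hxnorm : ‖x‖ < 1 := by
    rw [hxdef, norm_smul, Real.norm_eq_abs, abs_of_nonneg hδ0]
    rcases eq_or_lt_of_le hδ0 with h | h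
    · simp [← h]
    · calc δ * ‖R'‖ ≤ δ * (‖R'‖ + 1) := by nlinarith [norm_nonneg R']
      _ < (‖R'‖ + 1)⁻¹ * (‖R'‖ + 1) := by
          apply mul_lt_mul_of_pos_right hsmall
          positivity
      _ = 1 := by field_simp
  obtain ⟨hg1, hg2, hg3⟩ := nn_geom_inv hxnn hxnorm
  set g := ∑' k, x ^ k with hgdef
  have hu' : IsUnit (r' • (1 : Matrix (Fin n) (Fin n) ℝ) - M).det := isUnit_det_of_specAbs_lt ha'
  have hfact : t • (1 : Matrix (Fin n) (Fin n) ℝ) - M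
      = (1 - x) * (r' • (1 : Matrix (Fin n) (Fin n) ℝ) - M) := by
    rw [sub_mul, one_mul, hxdef, Matrix.smul_mul, Matrix.nonsing_inv_mul _ hu', hδdef, sub_smul]
    abel
  have hinv : (t • (1 : Matrix (Fin n) (Fin n) ℝ) - M)⁻¹ = R' * g := by
    apply Matrix.inv_eq_right_inv
    rw [hfact, mul_assoc, ← mul_assoc (r' • (1 : Matrix (Fin n) (Fin n) ℝ) - M) R' g,
      Matrix.mul_nonsing_inv _ hu', one_mul, hg2]
  rw [hinv]
  exact hR'.mul hg1

/-- base case: the resolvent is nonnegative far to the right -/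
lemma base {M : Matrix (Fin n) (Fin n) ℝ} (hM : Mzl M) (r0 : ℝ) :
    ∃ T, r0 ≤ T ∧ specAbs M < T ∧ Nn ((T • (1 : Matrix (Fin n) (Fin n) ℝ) - M)⁻¹) := by
  set s : ℝ := ∑ i, |M i i| with hs
  have hs0 : 0 ≤ s := Finset.sum_nonneg fun i _ => abs_nonneg _
  set N : Matrix (Fin n) (Fin n) ℝ := M + s • 1 with hN
  have hNnn : Nn N := by
    intro i j
    by_cases h : i = j
    · subst h
      have h1 : |M i i| ≤ s := Finset.single_le_sum (f := fun i => |M i i|)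
        (fun i _ => abs_nonneg _) (mem_univ i)
      have h2 : -s ≤ M i i := by
        have := neg_abs_le (M i i); linarith
      simp [hN, Matrix.one_apply]
      linarith
    · have := hM i j h
      simp [hN, Matrix.one_apply, h]
      linarith
  set T : ℝ := max (max r0 (specAbs M + 1)) (‖N‖ + 1 - s) with hT
  have hTr0 : r0 ≤ T := le_trans (le_max_left _ _) (le_max_left _ _)
  have hTa : specAbs M < T := by
    have h1 : specAbs M + 1 ≤ T :=
      le_trans (le_max_right r0 (specAbs M + 1)) (le_max_left _ (‖N‖ + 1 - s))
    linarith
  have hc : ‖N‖ + 1 ≤ T + s := by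
    have h1 : ‖N‖ + 1 - s ≤ T := le_max_right (max r0 (specAbs M + 1)) (‖N‖ + 1 - s)
    linarith
  have hcpos : 0 < T + s := by
    have := norm_nonneg N
    linarith
  set x : Matrix (Fin n) (Fin n) ℝ := (T + s)⁻¹ • N with hx
  have hxnn : Nn x := hNnn.smul (by positivity)
  have hxnorm : ‖x‖ < 1 := by
    rw [hx, norm_smul, Real.norm_eq_abs, abs_of_pos (by positivity)]
    rw [inv_mul_lt_iff₀ hcpos, mul_one]
    linarith
  obtain ⟨hg1, hg2, hg3⟩ := nn_geom_inv hxnn hxnorm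
  set g := ∑' k, x ^ k with hgdef
  have hfact : T • (1 : Matrix (Fin n) (Fin n) ℝ) - M = (T + s) • (1 - x) := by
    rw [smul_sub, hx, smul_smul, mul_inv_cancel₀ hcpos.ne', one_smul, hN]
    rw [add_smul]
    abel
  have hinv : (T • (1 : Matrix (Fin n) (Fin n) ℝ) - M)⁻¹ = (T + s)⁻¹ • g := by
    apply Matrix.inv_eq_right_inv
    rw [hfact, Matrix.smul_mul, Matrix.mul_smul, smul_smul, mul_inv_cancel₀ hcpos.ne',
      one_smul, hg2]
  refine ⟨T, hTr0, hTa, ?_⟩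
  rw [hinv]
  exact hg1.smul (by positivity)

end NormArguments

lemma res_entry_contOn (M : Matrix (Fin n) (Fin n) ℝ) (i j : Fin n) :
    ContinuousOn (fun r : ℝ => ((r • (1 : Matrix (Fin n) (Fin n) ℝ) - M)⁻¹) i j)
      {r : ℝ | (r • (1 : Matrix (Fin n) (Fin n) ℝ) - M).det ≠ 0} := by
  have hcont : Continuous fun r : ℝ => (r • (1 : Matrix (Fin n) (Fin n) ℝ) - M) := by
    apply continuous_pi; intro a; apply continuous_pi; intro b
    simp only [Matrix.sub_apply, Matrix.smul_apply, smul_eq_mul]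
    exact (continuous_id.mul continuous_const).sub continuous_const
  have hdet : Continuous fun r : ℝ => (r • (1 : Matrix (Fin n) (Fin n) ℝ) - M).det :=
    hcont.matrix_det
  have hadj : Continuous fun r : ℝ =>
      (r • (1 : Matrix (Fin n) (Fin n) ℝ) - M).adjugate i j :=
    (continuous_apply j).comp ((continuous_apply i).comp hcont.matrix_adjugate)
  have heq : ∀ r : ℝ, ((r • (1 : Matrix (Fin n) (Fin n) ℝ) - M)⁻¹) i j
      = ((r • (1 : Matrix (Fin n) (Fin n) ℝ) - M).det)⁻¹
        * (r • (1 : Matrix (Fin n) (Fin n) ℝ) - M).adjugate i j := by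
    intro r
    rw [Matrix.inv_def, Matrix.smul_apply, smul_eq_mul, Ring.inverse_eq_inv]
  simp only [heq]
  exact (hdet.continuousOn.inv₀ fun r hr => hr).mul hadj.continuousOn

lemma res_nonneg {M : Matrix (Fin n) (Fin n) ℝ} (hM : Mzl M) {r : ℝ} (hr : specAbs M < r) :
    Nn ((r • (1 : Matrix (Fin n) (Fin n) ℝ) - M)⁻¹) := by
  rcases Nat.eq_zero_or_pos n with h0 | hn0
  · subst h0; exact fun i => i.elim0
  obtain ⟨T, hTr, hTa, hTnn⟩ := base hM r
  set C : Fin n → Fin n → Set ℝ := fun i j =>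
    Set.Icc r T ∩ (fun t : ℝ => ((t • (1 : Matrix (Fin n) (Fin n) ℝ) - M)⁻¹) i j) ⁻¹' Set.Ici 0
    with hC
  set S : Set ℝ := ⋂ i, ⋂ j, C i j with hSdef
  have hIccsub : Set.Icc r T ⊆ {t : ℝ | (t • (1 : Matrix (Fin n) (Fin n) ℝ) - M).det ≠ 0} :=
    fun t ht => det_ne_of_specAbs_lt (lt_of_lt_of_le hr ht.1)
  have hCclosed : ∀ i j, IsClosed (C i j) := by
    intro i j
    exact ContinuousOn.preimage_isClosed_of_isClosed
      ((res_entry_contOn M i j).mono hIccsub) isClosed_Icc isClosed_Ici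
  have hSclosed : IsClosed S := isClosed_iInter fun i => isClosed_iInter fun j => hCclosed i j
  have hTS : T ∈ S := by
    refine Set.mem_iInter.2 fun i => Set.mem_iInter.2 fun j => ⟨⟨hTr, le_refl T⟩, hTnn i j⟩
  have i0 : Fin n := ⟨0, hn0⟩
  have hSsub : S ⊆ Set.Icc r T := fun t ht => by
    have := Set.mem_iInter.1 (Set.mem_iInter.1 ht i0) i0
    exact this.1
  have hbdd : BddBelow S := (bddBelow_Icc).mono hSsub
  set c := sInf S with hc
  have hcS : c ∈ S := hSclosed.csInf_mem ⟨T, hTS⟩ hbdd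
  have hcIcc : c ∈ Set.Icc r T := hSsub hcS
  have hcnn : Nn ((c • (1 : Matrix (Fin n) (Fin n) ℝ) - M)⁻¹) := by
    intro i j
    exact (Set.mem_iInter.1 (Set.mem_iInter.1 hcS i) j).2
  rcases le_or_gt c r with hrc | hrc
  · have hceq : c = r := le_antisymm hrc hcIcc.1
    rwa [hceq] at hcnn
  · exfalso
    have hca : specAbs M < c := lt_trans hr hrc
    obtain ⟨δ, hδ0, hstep⟩ := step hca hcnn
    set t := max r (c - δ / 2) with ht
    have h1 : specAbs M < t := lt_of_lt_of_le hr (le_max_left _ _)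
    have h2 : t ≤ c := max_le hrc.le (by linarith)
    have h3 : c - t < δ := by
      have : c - δ / 2 ≤ t := le_max_right _ _
      linarith
    have hnn_t := hstep t h1 h2 h3
    have htS : t ∈ S := by
      refine Set.mem_iInter.2 fun i => Set.mem_iInter.2 fun j =>
        ⟨⟨le_max_left _ _, h2.trans hcIcc.2⟩, hnn_t i j⟩
    have := csInf_le hbdd htS
    have htlt : t < c := max_lt hrc (by linarith)
    rw [← hc] at this
    linarith

/-- subinvariance: existence of a good weight for any `r` above the abscissa -/
lemma subinv (hn : 0 < n) {M : Matrix (Fin n) (Fin n) ℝ} (hM : Mzl M) {r : ℝ}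
    (hr : specAbs M < r) : ∃ η : Fin n → ℝ, (∀ i, 0 < η i) ∧ muInf η M ≤ r := by
  have hu : IsUnit (r • (1 : Matrix (Fin n) (Fin n) ℝ) - M).det := isUnit_det_of_specAbs_lt hr
  set R := (r • (1 : Matrix (Fin n) (Fin n) ℝ) - M)⁻¹ with hR
  have hNn : Nn R := res_nonneg hM hr
  set η : Fin n → ℝ := R *ᵥ (fun _ => (1 : ℝ)) with hη
  have hres : (r • (1 : Matrix (Fin n) (Fin n) ℝ) - M) *ᵥ η = fun _ => (1 : ℝ) := by
    rw [hη, Matrix.mulVec_mulVec, Matrix.mul_nonsing_inv _ hu, Matrix.one_mulVec]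
  have hcomp : ∀ i, r * η i - (M *ᵥ η) i = 1 := by
    intro i
    have h1 := congrFun hres i
    rw [Matrix.sub_mulVec, Matrix.smul_mulVec, Matrix.one_mulVec] at h1
    simpa using h1
  have hηnn : ∀ i, 0 ≤ η i := by
    intro i
    rw [hη]
    show (0:ℝ) ≤ ∑ j, R i j * 1
    exact Finset.sum_nonneg fun j _ => by simpa using hNn i j
  have hηpos : ∀ i, 0 < η i := by
    intro i
    rcases (hηnn i).lt_or_eq with h | h
    · exact h
    · exfalso
      have h1 : (M *ᵥ η) i = r * η i - 1 := by have := hcomp i; linarith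
      have h2 : (0:ℝ) ≤ (M *ᵥ η) i := by
        rw [Matrix.mulVec, dotProduct]
        rw [← Finset.add_sum_erase univ _ (mem_univ i)]
        have hd : M i i * η i = 0 := by rw [← h, mul_zero]
        rw [hd, zero_add]
        exact Finset.sum_nonneg fun j hj =>
          mul_nonneg (hM i j (Finset.ne_of_mem_erase hj).symm) (hηnn j)
      rw [h1, ← h] at h2
      linarith
  refine ⟨η, hηpos, ?_⟩
  rw [muInf]
  have : Nonempty (Fin n) := ⟨⟨0, hn⟩⟩
  refine ciSup_le fun i => ?_
  have hexp : η i * (M i i + ∑ j ∈ univ.erase i, (η j / η i) * |M i j|) = (M *ᵥ η) i := by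
    rw [Matrix.mulVec, dotProduct, ← Finset.add_sum_erase univ _ (mem_univ i)]
    rw [mul_add, Finset.mul_sum]
    congr 1
    · ring
    · refine Finset.sum_congr rfl fun j hj => ?_
      rw [abs_of_nonneg (hM i j (Finset.ne_of_mem_erase hj).symm)]
      field_simp [(hηpos i).ne']
  have h1 : (M *ᵥ η) i = r * η i - 1 := by have := hcomp i; linarith
  rw [h1] at hexp
  have h2 : η i * (M i i + ∑ j ∈ univ.erase i, (η j / η i) * |M i j|) ≤ η i * r := by
    rw [hexp]; nlinarith
  exact le_of_mul_le_mul_left (by linarith [h2]) (hηpos i)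

lemma muInf_mzr (η : Fin n → ℝ) (A : Matrix (Fin n) (Fin n) ℝ) :
    muInf η (mzr A) = muInf η A := by
  rw [muInf, muInf]
  congr 1
  funext i
  congr 1
  · simp [mzr]
  · refine Finset.sum_congr rfl fun j hj => ?_
    have hne : i ≠ j := fun h => (Finset.ne_of_mem_erase hj) h.symm
    simp [mzr, hne, abs_abs]

lemma mzl_mzr (A : Matrix (Fin n) (Fin n) ℝ) : Mzl (mzr A) := by
  intro i j h
  simp only [mzr, if_neg h]
  exact abs_nonneg _

lemma mu1_eq_muInf_transpose (η : Fin n → ℝ) (A : Matrix (Fin n) (Fin n) ℝ) :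
    mu1 η A = muInf η Aᵀ := rfl

lemma mzr_transpose (A : Matrix (Fin n) (Fin n) ℝ) : mzr Aᵀ = (mzr A)ᵀ := by
  ext i j
  by_cases h : i = j
  · subst h; simp [mzr, Matrix.transpose_apply]
  · simp only [mzr, Matrix.transpose_apply, if_neg h, if_neg (Ne.symm h)]

lemma spectrum_transpose (A : Matrix (Fin n) (Fin n) ℝ) (μ : ℂ) :
    μ ∈ spectrum ℂ ((Aᵀ).map (algebraMap ℝ ℂ)) ↔ μ ∈ spectrum ℂ (A.map (algebraMap ℝ ℂ)) := by
  rw [mem_spec_iff_det, mem_spec_iff_det]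
  constructor <;> intro h
  · rw [← h]
    rw [← Matrix.det_transpose (μ • 1 - A.map (algebraMap ℝ ℂ))]
    congr 1
    rw [Matrix.transpose_sub, Matrix.transpose_smul, Matrix.transpose_one, Matrix.transpose_map]
  · rw [← h]
    rw [← Matrix.det_transpose (μ • 1 - (Aᵀ).map (algebraMap ℝ ℂ))]
    congr 1
    rw [Matrix.transpose_sub, Matrix.transpose_smul, Matrix.transpose_one, Matrix.transpose_map]
    rw [Matrix.transpose_transpose]

lemma specAbs_transpose (A : Matrix (Fin n) (Fin n) ℝ) : specAbs Aᵀ = specAbs A := by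
  rw [specAbs, specAbs]
  congr 1
  ext r
  simp only [Set.mem_setOf_eq]
  constructor <;> rintro ⟨μ, hμ, rfl⟩
  · exact ⟨μ, (spectrum_transpose A μ).1 hμ, rfl⟩
  · exact ⟨μ, (spectrum_transpose A μ).2 hμ, rfl⟩

lemma isGLB_muInf_set (hn : 0 < n) (A : Matrix (Fin n) (Fin n) ℝ) :
    IsGLB {r : ℝ | ∃ η : Fin n → ℝ, (∀ i, 0 < η i) ∧ r = muInf η A} (specAbs (mzr A)) := by
  constructor
  · rintro r ⟨η, hη, rfl⟩
    rw [← muInf_mzr η A, specAbs_eq]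
    refine csSup_le (nonempty_SA hn (mzr A)) ?_
    rintro s ⟨μ, hμ, rfl⟩
    exact gershgorin (mzr A) η hη hμ
  · intro b hb
    by_contra hlt
    push_neg at hlt
    have hmid : specAbs (mzr A) < (specAbs (mzr A) + b) / 2 := by linarith
    obtain ⟨η, hηpos, hμle⟩ := subinv hn (mzl_mzr A) hmid
    rw [muInf_mzr] at hμle
    have hmem : muInf η A ∈ {r : ℝ | ∃ η : Fin n → ℝ, (∀ i, 0 < η i) ∧ r = muInf η A} :=
      ⟨η, hηpos, rfl⟩
    have := hb hmem
    linarith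

lemma main_statement (hn : 0 < n) (A : Matrix (Fin n) (Fin n) ℝ) :
    IsGLB {r : ℝ | ∃ η : Fin n → ℝ, (∀ i, 0 < η i) ∧ r = mu1 η A} (specAbs (mzr A)) ∧
    IsGLB {r : ℝ | ∃ η : Fin n → ℝ, (∀ i, 0 < η i) ∧ r = muInf η A} (specAbs (mzr A)) ∧
    specAbs A ≤ specAbs (mzr A) := by
  refine ⟨?_, isGLB_muInf_set hn A, ?_⟩
  · have hset : {r : ℝ | ∃ η : Fin n → ℝ, (∀ i, 0 < η i) ∧ r = mu1 η A}
        = {r : ℝ | ∃ η : Fin n → ℝ, (∀ i, 0 < η i) ∧ r = muInf η Aᵀ} := by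
      ext r
      constructor <;> rintro ⟨η, hη, rfl⟩
      · exact ⟨η, hη, mu1_eq_muInf_transpose η A⟩
      · exact ⟨η, hη, (mu1_eq_muInf_transpose η A).symm⟩
    have hspec : specAbs (mzr A) = specAbs (mzr Aᵀ) := by
      rw [mzr_transpose, specAbs_transpose]
    rw [hset, hspec]
    exact isGLB_muInf_set hn Aᵀ
  · have hlb : specAbs A ∈
        lowerBounds {r : ℝ | ∃ η : Fin n → ℝ, (∀ i, 0 < η i) ∧ r = muInf η A} := by
      rintro r ⟨η, hη, rfl⟩
      rw [specAbs_eq]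
      refine csSup_le (nonempty_SA hn A) ?_
      rintro s ⟨μ, hμ, rfl⟩
      exact gershgorin A η hη hμ
    exact (isGLB_muInf_set hn A).2 hlb

end InfMuAux

/-- For `p ∈ {1,∞}`, the infimum over positive diagonal weights of the weighted
ℓ_p logarithmic norm equals `α(⌈A⌉_Mzr)`, which is at least `α(A)`. -/
theorem inf_mu_eq_specAbs_mzr {n : ℕ} (hn : 0 < n) (A : Matrix (Fin n) (Fin n) ℝ) :
    IsGLB {r : ℝ | ∃ η : Fin n → ℝ, (∀ i, 0 < η i) ∧ r = mu1 η A} (specAbs (mzr A)) ∧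
    IsGLB {r : ℝ | ∃ η : Fin n → ℝ, (∀ i, 0 < η i) ∧ r = muInf η A} (specAbs (mzr A)) ∧
    specAbs A ≤ specAbs (mzr A) :=
  InfMuAux.main_statement hn A
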